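/- Fix any identification type (torus, Klein bottle, or projective plane). Let z be a cell of IMC, let V_z denote the copy of V_m containing z, and let 𝒱 be the set of all copies of V_m in IMC that share a corner vertex with V_z. Then #𝒱 ≤ 45. -/

import Mathlib

/-!
Magic carpets (Sierpinski carpet with torus / Klein bottle / projective plane
identifications of the sides of the vacant squares), following
"Analysis on the projective octagasket and other fractafolds" setup of the paper
"Magic carpets" (Goodman–Siu–Strichartz et al.).

Cells of the infinite blowup are indexed by their lower-left corners in `ℤ × ℤ`
(in units where every cell is a unit square).  A lattice square is a cell iff no
base-3 digit position carries the digit `1` in both coordinates simultaneously.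
The vacant square ("hole") of level `s` at block `(a, b)` is the middle ninth of
the level-`(s+1)` block with block coordinates `(a, b)`, i.e. the square
`[a·3^(s+1)+3^s, a·3^(s+1)+2·3^s) × [b·3^(s+1)+3^s, b·3^(s+1)+2·3^s)`; it is a
genuine vacant square of the carpet iff `(a,b)` itself satisfies the cell
condition.  Opposite sides of each vacant square are identified according to the
chosen identification type; orientation-reversal of a pair of sides reverses the
transverse coordinate.
-/

namespace MagicCarpet

/-- The three ways of identifying the two pairs of opposite sides of a vacant square:
torus (both pairs orientation preserved), Klein bottle (one pair preserved, one
reversed) and projective plane (both pairs reversed). -/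
inductive IdentType
  | torus
  | klein
  | proj
  deriving DecidableEq

/-- Whether crossing a vacant square horizontally (through its vertical pair of sides)
reverses the transverse (vertical) coordinate. -/
def flipH : IdentType → Bool
  | .torus => false
  | .klein => false
  | .proj => true

/-- Whether crossing a vacant square vertically (through its horizontal pair of sides)
reverses the transverse (horizontal) coordinate. -/
def flipV : IdentType → Bool
  | .torus => false
  | .klein => true
  | .proj => true

/-- An assignment of an identification type to every vacant square; the vacant square of
level `s` at block `(a, b)` receives the type `ι s a b`. -/
abbrev IdentAssignment := ℕ → ℤ → ℤ → IdentType

/-- The uniform assignment: the same identification type at every vacant square. -/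
def uniform (t : IdentType) : IdentAssignment := fun _ _ _ => t

/-- The base-3 digit of an integer at position `k` (floor division, so digits of
negative integers are eventually `2`). -/
def dig (k : ℕ) (n : ℤ) : ℤ := Int.emod (Int.ediv n (3 ^ k)) 3

/-- `p` is (the lower-left corner of) a cell of the infinite blowup of the Sierpinski
carpet iff no base-3 digit position carries the digit `1` in both coordinates. -/
def IsCell (p : ℤ × ℤ) : Prop := ∀ k : ℕ, ¬(dig k p.1 = 1 ∧ dig k p.2 = 1)

/-- The cells of the infinite magic carpet. -/
def Cell : Type := { p : ℤ × ℤ // IsCell p }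

/-- `p` and `q` are glued across the vacant square of level `s` at block `(a, b)`
horizontally: `p` is the cell immediately to the left of the vacant square, `q` the
corresponding cell immediately to its right (with the transverse coordinate reversed
when the identification of that pair of sides is orientation reversing). -/
def HoleAdjH (ι : IdentAssignment) (p q : ℤ × ℤ) : Prop :=
  ∃ (s : ℕ) (a b : ℤ), IsCell (a, b) ∧
    p.1 = a * 3 ^ (s + 1) + 3 ^ s - 1 ∧
    q.1 = a * 3 ^ (s + 1) + 2 * 3 ^ s ∧
    b * 3 ^ (s + 1) + 3 ^ s ≤ p.2 ∧ p.2 < b * 3 ^ (s + 1) + 2 * 3 ^ s ∧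
    q.2 = if flipH (ι s a b) then 2 * (b * 3 ^ (s + 1) + 3 ^ s) + 3 ^ s - 1 - p.2 else p.2

/-- Vertical analogue of `HoleAdjH`: `p` is immediately below the vacant square and `q`
immediately above it. -/
def HoleAdjV (ι : IdentAssignment) (p q : ℤ × ℤ) : Prop :=
  ∃ (s : ℕ) (a b : ℤ), IsCell (a, b) ∧
    p.2 = b * 3 ^ (s + 1) + 3 ^ s - 1 ∧
    q.2 = b * 3 ^ (s + 1) + 2 * 3 ^ s ∧
    a * 3 ^ (s + 1) + 3 ^ s ≤ p.1 ∧ p.1 < a * 3 ^ (s + 1) + 2 * 3 ^ s ∧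
    q.1 = if flipV (ι s a b) then 2 * (a * 3 ^ (s + 1) + 3 ^ s) + 3 ^ s - 1 - p.1 else p.1

/-- Two cells of the infinite magic carpet are adjacent iff they share an edge after
identification: either they share an edge in the plane, or they are glued together
across some vacant square. -/
def IMCAdj (ι : IdentAssignment) (p q : ℤ × ℤ) : Prop :=
  IsCell p ∧ IsCell q ∧ p ≠ q ∧
    (|p.1 - q.1| + |p.2 - q.2| = 1 ∨
      HoleAdjH ι p q ∨ HoleAdjH ι q p ∨ HoleAdjV ι p q ∨ HoleAdjV ι q p)

/-- The infinite magic carpet graph `IMC` determined by the identification assignment `ι`: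
vertices are the cells, two cells being adjacent exactly when they share an edge after
identification. -/
def IMC (ι : IdentAssignment) : SimpleGraph Cell where
  Adj p q := IMCAdj ι p.val q.val
  symm := by
    constructor
    rintro p q ⟨hp, hq, hne, hd⟩
    refine ⟨hq, hp, hne.symm, ?_⟩
    rcases hd with h | h | h | h | h
    · left
      rw [abs_sub_comm q.val.1 p.val.1, abs_sub_comm q.val.2 p.val.2]
      exact h
    · exact Or.inr (Or.inr (Or.inl h))
    · exact Or.inr (Or.inl h)
    · exact Or.inr (Or.inr (Or.inr (Or.inr h)))
    · exact Or.inr (Or.inr (Or.inr (Or.inl h)))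
  loopless := by
    constructor
    rintro p ⟨_, _, hne, _⟩
    exact hne rfl

/-- The ball `B(x, r)` of radius `r` around the cell `x`, in the geodesic graph metric
(the distance between two cells is the length of a shortest path of successively
adjacent cells joining them). -/
def ball (ι : IdentAssignment) (x : Cell) (r : ℕ) : Set Cell :=
  { y | (IMC ι).dist x y < r }

/-- The block coordinates of the copy of `V_m` containing the cell `p`. -/
def copyOf (m : ℕ) (p : Cell) : ℤ × ℤ :=
  (Int.ediv p.val.1 (3 ^ m), Int.ediv p.val.2 (3 ^ m))

/-- The cell `p` belongs to the copy of `V_m` with block coordinates `C`. -/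
def InCopy (m : ℕ) (C : ℤ × ℤ) (p : Cell) : Prop := copyOf m p = C

/-- The `3^m × 3^m` block with block coordinates `C` is a copy of `V_m` inside the
infinite magic carpet. -/
def IsCopy (C : ℤ × ℤ) : Prop := IsCell C

/-- `p` is one of the four corner cells of the copy of `V_m` at block `C`. -/
def IsCornerCell (m : ℕ) (C : ℤ × ℤ) (p : Cell) : Prop :=
  InCopy m C p ∧
    (p.val.1 = C.1 * 3 ^ m ∨ p.val.1 = (C.1 + 1) * 3 ^ m - 1) ∧
    (p.val.2 = C.2 * 3 ^ m ∨ p.val.2 = (C.2 + 1) * 3 ^ m - 1)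

/-- The sequence `R` with `R 0 = 0` and `R (m+1) = max (2·R m + 3) (2·R m + 2^m + 1)`. -/
def R : ℕ → ℕ
  | 0 => 0
  | m + 1 => max (2 * R m + 3) (2 * R m + 2 ^ m + 1)

/-- The four sides of a square block (or of a rectangular stack of blocks). -/
inductive Side
  | left
  | right
  | bottom
  | top
  deriving DecidableEq

/-- The opposite side. -/
def Side.opp : Side → Side
  | .left => .right
  | .right => .left
  | .bottom => .top
  | .top => .bottom

/-- The cell `p` lies in the copy of `V_m` at block `C`, along its side `d` (so one of the
edges of `p` lies on the corresponding `m`-edge of that copy). -/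
def OnSide (m : ℕ) (C : ℤ × ℤ) (d : Side) (p : Cell) : Prop :=
  InCopy m C p ∧
    match d with
    | .left => p.val.1 = C.1 * 3 ^ m
    | .right => p.val.1 = (C.1 + 1) * 3 ^ m - 1
    | .bottom => p.val.2 = C.2 * 3 ^ m
    | .top => p.val.2 = (C.2 + 1) * 3 ^ m - 1

/-- The column of cells with first coordinate `c` hits (has a cell whose edge lies on the
boundary of) the vacant square of level `s` whose horizontal block coordinate is `a`. -/
def ColumnHitsStitch (s : ℕ) (a : ℤ) (c : ℤ) : Prop :=
  a * 3 ^ (s + 1) + 3 ^ s - 1 ≤ c ∧ c ≤ a * 3 ^ (s + 1) + 2 * 3 ^ s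

/-- The vacant square of level `s` at block `(a, b)` lies in the interior of the copy of
`V_m` at block `C`. -/
def HoleInsideCopy (m : ℕ) (C : ℤ × ℤ) (s : ℕ) (a b : ℤ) : Prop :=
  C.1 * 3 ^ m ≤ a * 3 ^ (s + 1) ∧ (a + 1) * 3 ^ (s + 1) ≤ (C.1 + 1) * 3 ^ m ∧
  C.2 * 3 ^ m ≤ b * 3 ^ (s + 1) ∧ (b + 1) * 3 ^ (s + 1) ≤ (C.2 + 1) * 3 ^ m

/-- The copy of `V_m` at block `W` is glued just above the copy at block `V` (they are
vertical neighbours, intersecting along a horizontal `m`-edge): either the blocks are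
adjacent in the plane, or the top side of `V` and the bottom side of `W` are identified
sides of a vacant square of level `≥ m`.  The flag `f` records whether this gluing
reverses the horizontal coordinate. -/
def GluedVert (ι : IdentAssignment) (m : ℕ) (V W : ℤ × ℤ) (f : Bool) : Prop :=
  IsCell V ∧ IsCell W ∧
    ((W.1 = V.1 ∧ W.2 = V.2 + 1 ∧ f = false) ∨
      ∃ (s : ℕ) (a b : ℤ), m ≤ s ∧ IsCell (a, b) ∧
        (V.2 + 1) * 3 ^ m = b * 3 ^ (s + 1) + 3 ^ s ∧
        W.2 * 3 ^ m = b * 3 ^ (s + 1) + 2 * 3 ^ s ∧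
        a * 3 ^ (s + 1) + 3 ^ s ≤ V.1 * 3 ^ m ∧
        (V.1 + 1) * 3 ^ m ≤ a * 3 ^ (s + 1) + 2 * 3 ^ s ∧
        f = flipV (ι s a b) ∧
        (if f then W.1 * 3 ^ m = 2 * (a * 3 ^ (s + 1) + 3 ^ s) + 3 ^ s - (V.1 + 1) * 3 ^ m
          else W.1 = V.1))

/-- Horizontal analogue of `GluedVert`: `W` is glued just to the right of `V` (they are
horizontal neighbours, intersecting along a vertical `m`-edge). -/
def GluedHoriz (ι : IdentAssignment) (m : ℕ) (V W : ℤ × ℤ) (f : Bool) : Prop :=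
  IsCell V ∧ IsCell W ∧
    ((W.2 = V.2 ∧ W.1 = V.1 + 1 ∧ f = false) ∨
      ∃ (s : ℕ) (a b : ℤ), m ≤ s ∧ IsCell (a, b) ∧
        (V.1 + 1) * 3 ^ m = a * 3 ^ (s + 1) + 3 ^ s ∧
        W.1 * 3 ^ m = a * 3 ^ (s + 1) + 2 * 3 ^ s ∧
        b * 3 ^ (s + 1) + 3 ^ s ≤ V.2 * 3 ^ m ∧
        (V.2 + 1) * 3 ^ m ≤ b * 3 ^ (s + 1) + 2 * 3 ^ s ∧
        f = flipH (ι s a b) ∧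
        (if f then W.2 * 3 ^ m = 2 * (b * 3 ^ (s + 1) + 3 ^ s) + 3 ^ s - (V.2 + 1) * 3 ^ m
          else W.2 = V.2))

/-- An `m`-stack: a finite sequence of copies of `V_m`, consecutive copies being all
horizontal neighbours or all vertical neighbours.  Each copy carries a Boolean flag
recording its orientation relative to the first copy (so that the stack is isomorphic,
as a cell graph, to a rectangular stack of copies of `V_m`). -/
structure MStack (ι : IdentAssignment) (m : ℕ) where
  vert : Bool
  blocks : List ((ℤ × ℤ) × Bool)
  nonempty : blocks ≠ []
  copies : ∀ Bf ∈ blocks, IsCell Bf.1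
  head_flip : (blocks.head nonempty).2 = false
  chain : blocks.Chain' fun Vf Wf => ∃ g : Bool,
    (if vert then GluedVert ι m Vf.1 Wf.1 g else GluedHoriz ι m Vf.1 Wf.1 g) ∧
      Wf.2 = xor Vf.2 g

/-- The cell `p` lies in (one of the copies of `V_m` constituting) the `m`-stack `st`. -/
def MStack.MemCell {ι : IdentAssignment} {m : ℕ} (st : MStack ι m) (p : Cell) : Prop :=
  ∃ Bf ∈ st.blocks, copyOf m p = Bf.1

/-- The side `d` of the `3^m × 3^m` block `B`, as a set of points of the plane. -/
def blockSideSet (m : ℕ) (B : ℤ × ℤ) (d : Side) : Set (ℤ × ℤ) :=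
  match d with
  | .left => { p | p.1 = B.1 * 3 ^ m ∧ B.2 * 3 ^ m ≤ p.2 ∧ p.2 ≤ (B.2 + 1) * 3 ^ m }
  | .right => { p | p.1 = (B.1 + 1) * 3 ^ m ∧ B.2 * 3 ^ m ≤ p.2 ∧ p.2 ≤ (B.2 + 1) * 3 ^ m }
  | .bottom => { p | p.2 = B.2 * 3 ^ m ∧ B.1 * 3 ^ m ≤ p.1 ∧ p.1 ≤ (B.1 + 1) * 3 ^ m }
  | .top => { p | p.2 = (B.2 + 1) * 3 ^ m ∧ B.1 * 3 ^ m ≤ p.1 ∧ p.1 ≤ (B.1 + 1) * 3 ^ m }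

/-- The side `d` of the rectangular outer boundary of the `m`-stack `st`, as a set of
points of the plane (taking the recorded orientation flips into account). -/
def MStack.sideSet {ι : IdentAssignment} {m : ℕ} (st : MStack ι m) (d : Side) :
    Set (ℤ × ℤ) :=
  if st.vert then
    (match d with
    | .bottom => blockSideSet m (st.blocks.head st.nonempty).1 .bottom
    | .top => blockSideSet m (st.blocks.getLast st.nonempty).1 .top
    | .left =>
        { p | ∃ Bf ∈ st.blocks, p ∈ blockSideSet m Bf.1 (if Bf.2 then Side.right else Side.left) }
    | .right =>
        { p | ∃ Bf ∈ st.blocks, p ∈ blockSideSet m Bf.1 (if Bf.2 then Side.left else Side.right) })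
  else
    (match d with
    | .left => blockSideSet m (st.blocks.head st.nonempty).1 .left
    | .right => blockSideSet m (st.blocks.getLast st.nonempty).1 .right
    | .bottom =>
        { p | ∃ Bf ∈ st.blocks, p ∈ blockSideSet m Bf.1 (if Bf.2 then Side.top else Side.bottom) }
    | .top =>
        { p | ∃ Bf ∈ st.blocks, p ∈ blockSideSet m Bf.1 (if Bf.2 then Side.bottom else Side.top) })

/-- The side `d` of the unit cell with lower-left corner `c`, as a set of points. -/
def cellEdge (c : ℤ × ℤ) (d : Side) : Set (ℤ × ℤ) :=
  match d with
  | .left => { p | p.1 = c.1 ∧ c.2 ≤ p.2 ∧ p.2 ≤ c.2 + 1 }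
  | .right => { p | p.1 = c.1 + 1 ∧ c.2 ≤ p.2 ∧ p.2 ≤ c.2 + 1 }
  | .bottom => { p | p.2 = c.2 ∧ c.1 ≤ p.1 ∧ p.1 ≤ c.1 + 1 }
  | .top => { p | p.2 = c.2 + 1 ∧ c.1 ≤ p.1 ∧ p.1 ≤ c.1 + 1 }

/-- The cell `c` is on the set `S` (one of its four edges is contained in `S`). -/
def CellOnSet (c : Cell) (S : Set (ℤ × ℤ)) : Prop :=
  ∃ d : Side, cellEdge c.val d ⊆ S

/-- An axis-parallel segment of length `3^m` with `3^m`-aligned endpoints: if `vert` it is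
`{a·3^m} × [b·3^m, (b+1)·3^m]`, otherwise `[a·3^m, (a+1)·3^m] × {b·3^m}`.  (The `m`-edges
of the infinite magic carpet are such segments, taken up to identification.) -/
structure Seg where
  vert : Bool
  a : ℤ
  b : ℤ

/-- The set of points of the segment `e` (at scale `3^m`). -/
def Seg.pts (m : ℕ) (e : Seg) : Set (ℤ × ℤ) :=
  if e.vert then { p | p.1 = e.a * 3 ^ m ∧ e.b * 3 ^ m ≤ p.2 ∧ p.2 ≤ (e.b + 1) * 3 ^ m }
  else { p | p.2 = e.b * 3 ^ m ∧ e.a * 3 ^ m ≤ p.1 ∧ p.1 ≤ (e.a + 1) * 3 ^ m }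

/-- The segments `e` (on the left or bottom side of a vacant square of level `≥ m`) and
`e'` (the corresponding subsegment of the opposite side of that vacant square) are glued
by the identification of the sides of that vacant square. -/
def SegGlue (ι : IdentAssignment) (m : ℕ) (e e' : Seg) : Prop :=
  ∃ (s : ℕ) (a b : ℤ), m ≤ s ∧ IsCell (a, b) ∧
    ((e.vert = true ∧ e'.vert = true ∧
        e.a * 3 ^ m = a * 3 ^ (s + 1) + 3 ^ s ∧
        e'.a * 3 ^ m = a * 3 ^ (s + 1) + 2 * 3 ^ s ∧
        b * 3 ^ (s + 1) + 3 ^ s ≤ e.b * 3 ^ m ∧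
        (e.b + 1) * 3 ^ m ≤ b * 3 ^ (s + 1) + 2 * 3 ^ s ∧
        (if flipH (ι s a b) then
          e'.b * 3 ^ m = 2 * (b * 3 ^ (s + 1) + 3 ^ s) + 3 ^ s - (e.b + 1) * 3 ^ m
         else e'.b = e.b)) ∨
      (e.vert = false ∧ e'.vert = false ∧
        e.b * 3 ^ m = b * 3 ^ (s + 1) + 3 ^ s ∧
        e'.b * 3 ^ m = b * 3 ^ (s + 1) + 2 * 3 ^ s ∧
        a * 3 ^ (s + 1) + 3 ^ s ≤ e.a * 3 ^ m ∧
        (e.a + 1) * 3 ^ m ≤ a * 3 ^ (s + 1) + 2 * 3 ^ s ∧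
        (if flipV (ι s a b) then
          e'.a * 3 ^ m = 2 * (a * 3 ^ (s + 1) + 3 ^ s) + 3 ^ s - (e.a + 1) * 3 ^ m
         else e'.a = e.a)))

/-- Two segments represent the same `m`-edge of the infinite magic carpet iff they are
related by the equivalence generated by the gluings of the sides of the vacant squares. -/
def SegEquiv (ι : IdentAssignment) (m : ℕ) : Seg → Seg → Prop :=
  Relation.EqvGen fun e e' => SegGlue ι m e e' ∨ SegGlue ι m e' e

/-- The lattice points `p` (on the left or bottom side of a vacant square) and `q` (the
corresponding point of the opposite side) are glued by the identification of the sides of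
that vacant square. -/
def PtGlue (ι : IdentAssignment) (p q : ℤ × ℤ) : Prop :=
  ∃ (s : ℕ) (a b : ℤ), IsCell (a, b) ∧
    ((p.1 = a * 3 ^ (s + 1) + 3 ^ s ∧ q.1 = a * 3 ^ (s + 1) + 2 * 3 ^ s ∧
        b * 3 ^ (s + 1) + 3 ^ s ≤ p.2 ∧ p.2 ≤ b * 3 ^ (s + 1) + 2 * 3 ^ s ∧
        q.2 = if flipH (ι s a b) then 2 * (b * 3 ^ (s + 1) + 3 ^ s) + 3 ^ s - p.2 else p.2) ∨
      (p.2 = b * 3 ^ (s + 1) + 3 ^ s ∧ q.2 = b * 3 ^ (s + 1) + 2 * 3 ^ s ∧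
        a * 3 ^ (s + 1) + 3 ^ s ≤ p.1 ∧ p.1 ≤ a * 3 ^ (s + 1) + 2 * 3 ^ s ∧
        q.1 = if flipV (ι s a b) then 2 * (a * 3 ^ (s + 1) + 3 ^ s) + 3 ^ s - p.1 else p.1))

/-- Two lattice points represent the same vertex of the infinite magic carpet iff they
are related by the equivalence generated by the gluings of the sides of the vacant
squares. -/
def PtEquiv (ι : IdentAssignment) : ℤ × ℤ → ℤ × ℤ → Prop :=
  Relation.EqvGen fun p q => PtGlue ι p q ∨ PtGlue ι q p

/-- The segment forming the side `d` of the `3^m × 3^m` block `B`. -/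
def BlockSide (m : ℕ) (B : ℤ × ℤ) (d : Side) : Seg :=
  match d with
  | .left => ⟨true, B.1, B.2⟩
  | .right => ⟨true, B.1 + 1, B.2⟩
  | .bottom => ⟨false, B.1, B.2⟩
  | .top => ⟨false, B.1, B.2 + 1⟩

/-- The segment `e` represents the `m`-edge `E_{V,W}` along which the two distinct copies
`V` and `W` of `V_m` intersect after identification. -/
def IsEdgeBetween (ι : IdentAssignment) (m : ℕ) (V W : ℤ × ℤ) (e : Seg) : Prop :=
  V ≠ W ∧ IsCell V ∧ IsCell W ∧
    ∃ d d' : Side, SegEquiv ι m e (BlockSide m V d) ∧ SegEquiv ι m e (BlockSide m W d')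

/-- The `m`-edges represented by `e` and `e'` intersect (after identification). -/
def SegIntersect (ι : IdentAssignment) (m : ℕ) (e e' : Seg) : Prop :=
  ∃ (e₁ e₂ : Seg) (p q : ℤ × ℤ), SegEquiv ι m e e₁ ∧ SegEquiv ι m e' e₂ ∧
    p ∈ e₁.pts m ∧ q ∈ e₂.pts m ∧ PtEquiv ι p q

/-- The cell `c` is on the `m`-edge represented by `e` (one of its edges lies on the
`m`-edge, after identification). -/
def CellOnSeg (ι : IdentAssignment) (m : ℕ) (e : Seg) (c : Cell) : Prop :=
  ∃ e' : Seg, SegEquiv ι m e e' ∧ CellOnSet c (Seg.pts m e')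

/-- The `m`-edge represented by `e` lies (after identification) inside the point set `S`. -/
def SegOnSet (ι : IdentAssignment) (m : ℕ) (e : Seg) (S : Set (ℤ × ℤ)) : Prop :=
  ∃ e' : Seg, SegEquiv ι m e e' ∧ Seg.pts m e' ⊆ S

/-- The point `p` lies (after identification) on the `m`-edge represented by `e`. -/
def PtOnSeg (ι : IdentAssignment) (m : ℕ) (e : Seg) (p : ℤ × ℤ) : Prop :=
  ∃ (e' : Seg) (q : ℤ × ℤ), SegEquiv ι m e e' ∧ q ∈ Seg.pts m e' ∧ PtEquiv ι p q

/-- The `m`-sequence of a path: the copies of `V_m` containing its successive cells, with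
consecutive repetitions deleted. -/
def mSeq (ι : IdentAssignment) (m : ℕ) {x y : Cell} (w : (IMC ι).Walk x y) :
    List (ℤ × ℤ) :=
  (w.support.map (copyOf m)).destutter (· ≠ ·)

/-- `(i, V, W)` is an `m`-segment-of-two of the list `L`: `V` is the `i`-th entry of `L`,
`W` the `(i+1)`-st, and neither `V` nor `W` is the `(i-1)`-st entry (if it exists). -/
def IsSegTwo (L : List (ℤ × ℤ)) (i : ℕ) (V W : ℤ × ℤ) : Prop :=
  L[i]? = some V ∧ L[i + 1]? = some W ∧
    (i = 0 ∨ ∀ U, L[i - 1]? = some U → U ≠ V ∧ U ≠ W)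

/-- The path `w` enters the `m`-segment-of-two with copies `V, W` through the `m`-edge
represented by `e`: it has consecutive cells, both on that `m`-edge, of which only the
second lies in `V` or `W`. -/
def EntersThrough (ι : IdentAssignment) (m : ℕ) {x y : Cell} (w : (IMC ι).Walk x y)
    (V W : ℤ × ℤ) (e : Seg) : Prop :=
  ∃ (n : ℕ) (c c' : Cell), w.support[n]? = some c ∧ w.support[n + 1]? = some c' ∧
    CellOnSeg ι m e c ∧ CellOnSeg ι m e c' ∧
    copyOf m c ≠ V ∧ copyOf m c ≠ W ∧ (copyOf m c' = V ∨ copyOf m c' = W)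

/-- The path `w` exits the `m`-segment-of-two with copies `V, W` through the `m`-edge
represented by `e`: it has consecutive cells, both on that `m`-edge, of which only the
first lies in `V` or `W`. -/
def ExitsThrough (ι : IdentAssignment) (m : ℕ) {x y : Cell} (w : (IMC ι).Walk x y)
    (V W : ℤ × ℤ) (e : Seg) : Prop :=
  ∃ (n : ℕ) (c c' : Cell), w.support[n]? = some c ∧ w.support[n + 1]? = some c' ∧
    CellOnSeg ι m e c ∧ CellOnSeg ι m e c' ∧
    (copyOf m c = V ∨ copyOf m c = W) ∧ copyOf m c' ≠ V ∧ copyOf m c' ≠ W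

/-- `p` is the center of the `m`-segment-of-two `(i, V, W)` of the path `w`: the vertex at
which `E_{V,W}` and those of `Ent(i)`, `Exit(i)` that exist all intersect. -/
def IsCenter (ι : IdentAssignment) (m : ℕ) {x y : Cell} (w : (IMC ι).Walk x y) (i : ℕ)
    (V W : ℤ × ℤ) (p : ℤ × ℤ) : Prop :=
  IsSegTwo (mSeq ι m w) i V W ∧
    (∃ e : Seg, EntersThrough ι m w V W e ∨ ExitsThrough ι m w V W e) ∧
    (∃ evw : Seg, IsEdgeBetween ι m V W evw ∧ PtOnSeg ι m evw p) ∧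
    (∀ e : Seg, EntersThrough ι m w V W e → PtOnSeg ι m e p) ∧
    (∀ e : Seg, ExitsThrough ι m w V W e → PtOnSeg ι m e p)

/-- `p` is one of the four corner points of the copy of `V_m` at block `C`. -/
def IsCornerPt (m : ℕ) (C : ℤ × ℤ) (p : ℤ × ℤ) : Prop :=
  (p.1 = C.1 * 3 ^ m ∨ p.1 = (C.1 + 1) * 3 ^ m) ∧
  (p.2 = C.2 * 3 ^ m ∨ p.2 = (C.2 + 1) * 3 ^ m)

/-- The copies of `V_m` at blocks `C` and `D` share a corner vertex (after
identification). -/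
def SharesCornerVertex (ι : IdentAssignment) (m : ℕ) (C D : ℤ × ℤ) : Prop :=
  ∃ p q : ℤ × ℤ, IsCornerPt m C p ∧ IsCornerPt m D q ∧ PtEquiv ι p q

/-- Reduction of cell coordinates modulo the period lattice `3^m · ℤ²`. -/
def redMod (m : ℕ) (p : ℤ × ℤ) : ℤ × ℤ := (Int.emod p.1 (3 ^ m), Int.emod p.2 (3 ^ m))

/-- `p` lies in the fundamental domain `[0, 3^m) × [0, 3^m)`. -/
def InFund (m : ℕ) (p : ℤ × ℤ) : Prop := 0 ≤ p.1 ∧ p.1 < 3 ^ m ∧ 0 ≤ p.2 ∧ p.2 < 3 ^ m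

/-- Adjacency across the outer boundary of `MCT_m` (opposite sides of the outer square
identified with orientation preserved). -/
def WrapAdj (m : ℕ) (p q : ℤ × ℤ) : Prop :=
  (p.1 = 3 ^ m - 1 ∧ q.1 = 0 ∧ q.2 = p.2) ∨ (p.2 = 3 ^ m - 1 ∧ q.2 = 0 ∧ q.1 = p.1)

/-- The cell graph of `MCT_m`, the level-`m` magic carpet with torus identifications of
all inner vacant squares and of the outer boundary, on the cells of the fundamental
domain. -/
def MCTAdj (m : ℕ) (p q : ℤ × ℤ) : Prop :=
  InFund m p ∧ InFund m q ∧ IsCell p ∧ IsCell q ∧ p ≠ q ∧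
    (|p.1 - q.1| + |p.2 - q.2| = 1 ∨
      HoleAdjH (uniform .torus) p q ∨ HoleAdjH (uniform .torus) q p ∨
      HoleAdjV (uniform .torus) p q ∨ HoleAdjV (uniform .torus) q p ∨
      WrapAdj m p q ∨ WrapAdj m q p)

/-! ### Auxiliary development for `corner_sharing_copies_card` -/

section Aux45

lemma pow3_pos (s : ℕ) : (0:ℤ) < 3 ^ s := by positivity

lemma pow3_ne (s : ℕ) : (3:ℤ) ^ s ≠ 0 := (pow3_pos s).ne'

/-- `p` lies on a vertical side of the (possibly fake) hole of level `s` at `(a,b)`. -/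
def HAt (s : ℕ) (a b : ℤ) (p : ℤ × ℤ) : Prop :=
  (p.1 = (3*a+1)*3^s ∨ p.1 = (3*a+2)*3^s) ∧
  (3*b+1)*3^s ≤ p.2 ∧ p.2 ≤ (3*b+2)*3^s

/-- `p` lies on a horizontal side of the hole of level `s` at `(a,b)`. -/
def VAt (s : ℕ) (a b : ℤ) (p : ℤ × ℤ) : Prop :=
  (p.2 = (3*b+1)*3^s ∨ p.2 = (3*b+2)*3^s) ∧
  (3*a+1)*3^s ≤ p.1 ∧ p.1 ≤ (3*a+2)*3^s

/-- Horizontal gluing map across the hole of level `s` at `(a,b)`. -/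
def Hmap (t : IdentType) (s : ℕ) (a b : ℤ) (p : ℤ × ℤ) : ℤ × ℤ :=
  ((6*a+3)*3^s - p.1, if flipH t then (6*b+3)*3^s - p.2 else p.2)

/-- Vertical gluing map across the hole of level `s` at `(a,b)`. -/
def Vmap (t : IdentType) (s : ℕ) (a b : ℤ) (p : ℤ × ℤ) : ℤ × ℤ :=
  ((if flipV t then (6*a+3)*3^s - p.1 else p.1), (6*b+3)*3^s - p.2)

lemma Hmap_invol (t : IdentType) (s : ℕ) (a b : ℤ) (p : ℤ × ℤ) :
    Hmap t s a b (Hmap t s a b p) = p := by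
  unfold Hmap; cases h : flipH t <;> simp [h]

lemma Vmap_invol (t : IdentType) (s : ℕ) (a b : ℤ) (p : ℤ × ℤ) :
    Vmap t s a b (Vmap t s a b p) = p := by
  unfold Vmap; cases h : flipV t <;> simp [h]

lemma Hmap_Vmap_comm (t : IdentType) (s : ℕ) (a b : ℤ) (p : ℤ × ℤ) :
    Hmap t s a b (Vmap t s a b p) = Vmap t s a b (Hmap t s a b p) := by
  unfold Hmap Vmap
  cases h : flipH t <;> cases h' : flipV t <;> simp [h, h'] <;> ring

/-- If `u·3^s = u'·3^s'` with `u, u'` prime to 3, then `s = s'` and `u = u'`. -/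
lemma lev_eq {s s' : ℕ} {u u' : ℤ} (hu : u % 3 ≠ 0) (hu' : u' % 3 ≠ 0)
    (h : u * 3^s = u' * 3^s') : s = s' ∧ u = u' := by
  rcases le_total s s' with hle | hle
  · have h3 : (3:ℤ)^s' = 3^(s' - s) * 3^s := by
      rw [← pow_add]; congr 1; omega
    rw [h3, ← mul_assoc] at h
    have hu2 : u = u' * 3^(s' - s) := mul_right_cancel₀ (pow3_ne s) h
    rcases Nat.eq_or_lt_of_le hle with he | hlt
    · refine ⟨he, ?_⟩
      simpa [he] using hu2
    · exfalso
      have : s' - s = (s' - s - 1) + 1 := by omega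
      rw [this, pow_succ, ← mul_assoc] at hu2
      omega
  · have h3 : (3:ℤ)^s = 3^(s - s') * 3^s' := by
      rw [← pow_add]; congr 1; omega
    rw [h3, ← mul_assoc] at h
    have hu2 : u * 3^(s - s') = u' := mul_right_cancel₀ (pow3_ne s') h
    rcases Nat.eq_or_lt_of_le hle with he | hlt
    · refine ⟨he.symm, ?_⟩
      rw [← hu2]; simp [he]
    · exfalso
      have : s - s' = (s - s' - 1) + 1 := by omega
      rw [this, pow_succ, ← mul_assoc] at hu2
      omega

lemma interval_le {T x y : ℤ} (hT : 0 < T) (h : x * T ≤ y * T) : x ≤ y :=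
  le_of_mul_le_mul_right h hT

/-- Uniqueness of the hole attached horizontally. -/
lemma HAt_unique {s s' : ℕ} {a b a' b' : ℤ} {p : ℤ × ℤ}
    (h : HAt s a b p) (h' : HAt s' a' b' p) : s = s' ∧ a = a' ∧ b = b' := by
  obtain ⟨hx, hy1, hy2⟩ := h
  obtain ⟨hx', hy1', hy2'⟩ := h'
  have key : s = s' ∧ a = a' := by
    rcases hx with hx | hx <;> rcases hx' with hx' | hx' <;>
    · obtain ⟨hs, hu⟩ := lev_eq (u := _) (u' := _) (by omega) (by omega) (hx.symm.trans hx')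
      exact ⟨hs, by omega⟩
  obtain ⟨hs, ha⟩ := key
  subst hs
  have b1 : 3*b+1 ≤ 3*b'+2 := interval_le (pow3_pos s) (le_trans hy1 hy2')
  have b2 : 3*b'+1 ≤ 3*b+2 := interval_le (pow3_pos s) (le_trans hy1' hy2)
  exact ⟨rfl, ha, by omega⟩

lemma VAt_unique {s s' : ℕ} {a b a' b' : ℤ} {p : ℤ × ℤ}
    (h : VAt s a b p) (h' : VAt s' a' b' p) : s = s' ∧ a = a' ∧ b = b' := by
  obtain ⟨hs, hb, ha⟩ := HAt_unique (p := (p.2, p.1)) ⟨h.1, h.2⟩ ⟨h'.1, h'.2⟩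
  exact ⟨hs, ha, hb⟩

/-- A point strictly divisible interval contradiction helper. -/
lemma no_mid_div {T b y : ℤ} (hT : 0 < T) (h1 : (3*b+1)*T ≤ y) (h2 : y ≤ (3*b+2)*T)
    (M : ℤ) (hy : y = 3*M*T) : False := by
  rw [hy] at h1 h2
  have l1 : 3*b+1 ≤ 3*M := interval_le hT h1
  have l2 : 3*M ≤ 3*b+2 := interval_le hT h2
  omega

lemma pow3_split {s s' : ℕ} (h : s < s') (u : ℤ) :
    u * 3^s' = 3 * (u * 3^(s' - s - 1)) * 3^s := by
  rw [show (3:ℤ)^s' = 3^1 * 3^(s' - s - 1) * 3^s by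
    rw [← pow_add, ← pow_add]; congr 1; omega]
  ring

/-- A horizontally attached hole and a vertically attached hole coincide. -/
lemma HAt_VAt_unique {s s' : ℕ} {a b a' b' : ℤ} {p : ℤ × ℤ}
    (h : HAt s a b p) (h' : VAt s' a' b' p) : s = s' ∧ a = a' ∧ b = b' := by
  obtain ⟨hx, hy1, hy2⟩ := h
  obtain ⟨hy', hx1', hx2'⟩ := h'
  have hss : s = s' := by
    rcases lt_trichotomy s s' with hlt | he | hlt
    · exfalso
      rcases hy' with hy' | hy' <;>
        exact no_mid_div (pow3_pos s) hy1 hy2 _ (hy'.trans (pow3_split hlt _))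
    · exact he
    · exfalso
      rcases hx with hx | hx <;>
        exact no_mid_div (pow3_pos s') hx1' hx2' _ (hx.trans (pow3_split hlt _))
  subst hss
  refine ⟨rfl, ?_, ?_⟩
  · rcases hx with hx | hx <;>
    · rw [hx] at hx1' hx2'
      have := interval_le (pow3_pos s) hx1'
      have := interval_le (pow3_pos s) hx2'
      omega
  · rcases hy' with hy' | hy' <;>
    · rw [hy'] at hy1 hy2
      have := interval_le (pow3_pos s) hy1
      have := interval_le (pow3_pos s) hy2
      omega

end Aux45
section Aux45b

lemma two_le {s : ℕ} (b : ℤ) : (3*b+1)*3^s ≤ (3*b+2)*3^s := by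
  nlinarith [pow3_pos s]

lemma refl_mem {s : ℕ} {b y : ℤ} (h : y = (3*b+1)*3^s ∨ y = (3*b+2)*3^s) :
    (6*b+3)*3^s - y = (3*b+1)*3^s ∨ (6*b+3)*3^s - y = (3*b+2)*3^s := by
  rcases h with h | h
  · right; rw [h]; ring
  · left; rw [h]; ring

lemma refl_interval {s : ℕ} {b y : ℤ} (h1 : (3*b+1)*3^s ≤ y) (h2 : y ≤ (3*b+2)*3^s) :
    (3*b+1)*3^s ≤ (6*b+3)*3^s - y ∧ (6*b+3)*3^s - y ≤ (3*b+2)*3^s :=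
  ⟨by linarith, by linarith⟩

lemma mem_interval {s : ℕ} {b y : ℤ} (h : y = (3*b+1)*3^s ∨ y = (3*b+2)*3^s) :
    (3*b+1)*3^s ≤ y ∧ y ≤ (3*b+2)*3^s := by
  rcases h with h | h <;> rw [h] <;> exact ⟨by nlinarith [pow3_pos s], by nlinarith [pow3_pos s]⟩

lemma Hmap_fst (t : IdentType) (s : ℕ) (a b : ℤ) (p : ℤ × ℤ) :
    (Hmap t s a b p).1 = (6*a+3)*3^s - p.1 := rfl

lemma Hmap_snd (t : IdentType) (s : ℕ) (a b : ℤ) (p : ℤ × ℤ) :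
    (Hmap t s a b p).2 = if flipH t then (6*b+3)*3^s - p.2 else p.2 := rfl

lemma Vmap_fst (t : IdentType) (s : ℕ) (a b : ℤ) (p : ℤ × ℤ) :
    (Vmap t s a b p).1 = if flipV t then (6*a+3)*3^s - p.1 else p.1 := rfl

lemma Vmap_snd (t : IdentType) (s : ℕ) (a b : ℤ) (p : ℤ × ℤ) :
    (Vmap t s a b p).2 = (6*b+3)*3^s - p.2 := rfl

lemma HAt_Hmap {t : IdentType} {s : ℕ} {a b : ℤ} {p : ℤ × ℤ} (h : HAt s a b p) :
    HAt s a b (Hmap t s a b p) := by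
  obtain ⟨hx, hy1, hy2⟩ := h
  refine ⟨by rw [Hmap_fst]; exact refl_mem hx, ?_⟩
  rw [Hmap_snd]
  split_ifs
  · exact refl_interval hy1 hy2
  · exact ⟨hy1, hy2⟩

lemma VAt_Vmap {t : IdentType} {s : ℕ} {a b : ℤ} {p : ℤ × ℤ} (h : VAt s a b p) :
    VAt s a b (Vmap t s a b p) := by
  obtain ⟨hy, hx1, hx2⟩ := h
  refine ⟨by rw [Vmap_snd]; exact refl_mem hy, ?_⟩
  rw [Vmap_fst]
  split_ifs
  · exact refl_interval hx1 hx2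
  · exact ⟨hx1, hx2⟩

lemma VAt_Hmap {t : IdentType} {s : ℕ} {a b : ℤ} {p : ℤ × ℤ}
    (h : HAt s a b p) (h' : VAt s a b p) : VAt s a b (Hmap t s a b p) := by
  obtain ⟨hy, _, _⟩ := h'
  refine ⟨?_, ?_, ?_⟩
  · rw [Hmap_snd]
    split_ifs
    · exact refl_mem hy
    · exact hy
  · rw [Hmap_fst]
    exact (mem_interval (refl_mem h.1)).1
  · rw [Hmap_fst]
    exact (mem_interval (refl_mem h.1)).2

lemma HAt_Vmap {t : IdentType} {s : ℕ} {a b : ℤ} {p : ℤ × ℤ}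
    (h : HAt s a b p) (h' : VAt s a b p) : HAt s a b (Vmap t s a b p) := by
  obtain ⟨hx, _, _⟩ := h
  refine ⟨?_, ?_, ?_⟩
  · rw [Vmap_fst]
    split_ifs
    · exact refl_mem hx
    · exact hx
  · rw [Vmap_snd]
    exact (mem_interval (refl_mem h'.1)).1
  · rw [Vmap_snd]
    exact (mem_interval (refl_mem h'.1)).2

/-- Superset of the `PtEquiv`-class of `p` (for the uniform assignment of type `t`). -/
def orb (t : IdentType) (p : ℤ × ℤ) : Set (ℤ × ℤ) :=
  {q | q = p ∨ (∃ s a b, HAt s a b p ∧ q = Hmap t s a b p)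
     ∨ (∃ s a b, VAt s a b p ∧ q = Vmap t s a b p)
     ∨ (∃ s a b, HAt s a b p ∧ VAt s a b p ∧ q = Vmap t s a b (Hmap t s a b p))}

lemma mem_orb_self (t : IdentType) (p : ℤ × ℤ) : p ∈ orb t p := Or.inl rfl

/-- Core inclusion for a horizontal gluing. -/
lemma orb_subset_H {t : IdentType} {s : ℕ} {a b : ℤ} {p q : ℤ × ℤ}
    (hp : HAt s a b p) (hq : HAt s a b q)
    (h1 : q = Hmap t s a b p) : orb t p ⊆ orb t q := by
  have h2 : p = Hmap t s a b q := by rw [h1, Hmap_invol]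
  intro r hr
  rcases hr with hr | ⟨s', a', b', h', hr⟩ | ⟨s', a', b', h', hr⟩ |
    ⟨s', a', b', h', hV', hr⟩
  · exact Or.inr (Or.inl ⟨s, a, b, hq, by rw [hr, h2]⟩)
  · obtain ⟨hs, ha, hb⟩ := HAt_unique h' hp
    subst hs; subst ha; subst hb
    exact Or.inl (by rw [hr, ← h1])
  · obtain ⟨hs, ha, hb⟩ := HAt_VAt_unique hp h'
    rw [← hs, ← ha, ← hb] at h' hr
    have hVq : VAt s a b q := by rw [h1]; exact VAt_Hmap hp h'
    refine Or.inr (Or.inr (Or.inr ⟨s, a, b, hq, hVq, ?_⟩))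
    rw [hr, h2]
  · obtain ⟨hs, ha, hb⟩ := HAt_unique h' hp
    rw [hs, ha, hb] at hV' hr
    have hVq : VAt s a b q := by rw [h1]; exact VAt_Hmap hp hV'
    refine Or.inr (Or.inr (Or.inl ⟨s, a, b, hVq, ?_⟩))
    rw [hr, h1]

/-- Core inclusion for a vertical gluing. -/
lemma orb_subset_V {t : IdentType} {s : ℕ} {a b : ℤ} {p q : ℤ × ℤ}
    (hp : VAt s a b p) (hq : VAt s a b q)
    (h1 : q = Vmap t s a b p) : orb t p ⊆ orb t q := by
  have h2 : p = Vmap t s a b q := by rw [h1, Vmap_invol]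
  intro r hr
  rcases hr with hr | ⟨s', a', b', h', hr⟩ | ⟨s', a', b', h', hr⟩ |
    ⟨s', a', b', h', hV', hr⟩
  · exact Or.inr (Or.inr (Or.inl ⟨s, a, b, hq, by rw [hr, h2]⟩))
  · obtain ⟨hs, ha, hb⟩ := HAt_VAt_unique h' hp
    rw [hs, ha, hb] at h' hr
    have hHq : HAt s a b q := by rw [h1]; exact HAt_Vmap h' hp
    refine Or.inr (Or.inr (Or.inr ⟨s, a, b, hHq, hq, ?_⟩))
    rw [hr, h2]
    exact Hmap_Vmap_comm t s a b q
  · obtain ⟨hs, ha, hb⟩ := VAt_unique h' hp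
    subst hs; subst ha; subst hb
    exact Or.inl (by rw [hr, ← h1])
  · obtain ⟨hs, ha, hb⟩ := VAt_unique hV' hp
    rw [hs, ha, hb] at h' hr
    have hHq : HAt s a b q := by rw [h1]; exact HAt_Vmap h' hp
    refine Or.inr (Or.inl ⟨s, a, b, hHq, ?_⟩)
    rw [hr, h1]
    exact (Hmap_Vmap_comm t s a b p).symm

end Aux45b
section Aux45c

lemma glue_orb_eq {t : IdentType} {p q : ℤ × ℤ} (h : PtGlue (uniform t) p q) :
    orb t p = orb t q := by
  obtain ⟨s, a, b, hcell, hH | hV⟩ := h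
  · obtain ⟨h1, h2, h3, h4, h5⟩ := hH
    have e3 : (3*b+1)*3^s ≤ p.2 := by
      calc (3*b+1)*3^s = b*3^(s+1)+3^s := by rw [pow_succ]; ring
        _ ≤ p.2 := h3
    have e4 : p.2 ≤ (3*b+2)*3^s := by
      calc p.2 ≤ b*3^(s+1)+2*3^s := h4
        _ = (3*b+2)*3^s := by rw [pow_succ]; ring
    have hp : HAt s a b p := ⟨Or.inl (by rw [h1, pow_succ]; ring), e3, e4⟩
    have heq : q = Hmap t s a b p := by
      refine Prod.ext_iff.mpr ⟨?_, ?_⟩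
      · rw [Hmap_fst, h2, h1, pow_succ]; ring
      · rw [Hmap_snd]
        have h5' : q.2 = if flipH t then 2*(b*3^(s+1)+3^s)+3^s - p.2 else p.2 := h5
        rw [h5']
        cases hf : flipH t
        · simp [hf]
        · simp only [hf, if_true]
          rw [pow_succ]; ring
    have hq : HAt s a b q := by rw [heq]; exact HAt_Hmap hp
    have heq' : p = Hmap t s a b q := by rw [heq, Hmap_invol]
    exact subset_antisymm (orb_subset_H hp hq heq) (orb_subset_H hq hp heq')
  · obtain ⟨h1, h2, h3, h4, h5⟩ := hV
    have e3 : (3*a+1)*3^s ≤ p.1 := by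
      calc (3*a+1)*3^s = a*3^(s+1)+3^s := by rw [pow_succ]; ring
        _ ≤ p.1 := h3
    have e4 : p.1 ≤ (3*a+2)*3^s := by
      calc p.1 ≤ a*3^(s+1)+2*3^s := h4
        _ = (3*a+2)*3^s := by rw [pow_succ]; ring
    have hp : VAt s a b p := ⟨Or.inl (by rw [h1, pow_succ]; ring), e3, e4⟩
    have heq : q = Vmap t s a b p := by
      refine Prod.ext_iff.mpr ⟨?_, ?_⟩
      · rw [Vmap_fst]
        have h5' : q.1 = if flipV t then 2*(a*3^(s+1)+3^s)+3^s - p.1 else p.1 := h5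
        rw [h5']
        cases hf : flipV t
        · simp [hf]
        · simp only [hf, if_true]
          rw [pow_succ]; ring
      · rw [Vmap_snd, h2, h1, pow_succ]; ring
    have hq : VAt s a b q := by rw [heq]; exact VAt_Vmap hp
    have heq' : p = Vmap t s a b q := by rw [heq, Vmap_invol]
    exact subset_antisymm (orb_subset_V hp hq heq) (orb_subset_V hq hp heq')

lemma ptEquiv_mem_orb {t : IdentType} {p q : ℤ × ℤ}
    (h : PtEquiv (uniform t) p q) : q ∈ orb t p := by
  have key : orb t p = orb t q := by
    induction h with
    | rel x y hxy =>
        rcases hxy with h | h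
        · exact glue_orb_eq h
        · exact (glue_orb_eq h).symm
    | refl x => rfl
    | symm x y _ ih => exact ih.symm
    | trans x y z _ _ ih1 ih2 => exact ih1.trans ih2
  rw [key]
  exact mem_orb_self t q

end Aux45c
section Aux45d

lemma ediv_eq_div (a b : ℤ) : Int.ediv a b = a / b := rfl

/-- The (at most four) blocks having `q` as a corner point. -/
def blocksAt (m : ℕ) (q : ℤ × ℤ) : Finset (ℤ × ℤ) :=
  {(q.1 / 3^m, q.2 / 3^m), (q.1 / 3^m - 1, q.2 / 3^m),
   (q.1 / 3^m, q.2 / 3^m - 1), (q.1 / 3^m - 1, q.2 / 3^m - 1)}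

lemma blocksAt_card_le (m : ℕ) (q : ℤ × ℤ) : (blocksAt m q).card ≤ 4 := by
  refine le_trans (Finset.card_insert_le _ _) ?_
  refine le_trans (Nat.succ_le_succ (Finset.card_insert_le _ _)) ?_
  refine le_trans (Nat.succ_le_succ (Nat.succ_le_succ (Finset.card_insert_le _ _))) ?_
  simp

lemma mem_blocksAt_of_corner {m : ℕ} {D q : ℤ × ℤ} (h : IsCornerPt m D q) :
    D ∈ blocksAt m q := by
  obtain ⟨h1, h2⟩ := h
  have e1 : D.1 = q.1 / 3^m ∨ D.1 = q.1 / 3^m - 1 := by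
    rcases h1 with h1 | h1
    · left; rw [h1, Int.mul_ediv_cancel _ (pow3_ne m)]
    · right; rw [h1, Int.mul_ediv_cancel _ (pow3_ne m)]; ring
  have e2 : D.2 = q.2 / 3^m ∨ D.2 = q.2 / 3^m - 1 := by
    rcases h2 with h2 | h2
    · left; rw [h2, Int.mul_ediv_cancel _ (pow3_ne m)]
    · right; rw [h2, Int.mul_ediv_cancel _ (pow3_ne m)]; ring
  simp only [blocksAt, Finset.mem_insert, Finset.mem_singleton, Prod.ext_iff]
  rcases e1 with e1 | e1 <;> rcases e2 with e2 | e2 <;> tauto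

def corX (s : ℕ) (a : ℤ) (i : Bool) : ℤ := cond i ((3*a+2)*3^s) ((3*a+1)*3^s)

def innX (j : ℕ) (a : ℤ) (i : Bool) : ℤ := cond i ((3*a+2)*3^j - 1) ((3*a+1)*3^j)

def cornerPt (s : ℕ) (a b : ℤ) (i1 i2 : Bool) : ℤ × ℤ := (corX s a i1, corX s b i2)

def innerB (j : ℕ) (a b : ℤ) (i1 i2 : Bool) : ℤ × ℤ := (innX j a i1, innX j b i2)

lemma ediv_pow_add {u r : ℤ} (k : ℕ) (h0 : 0 ≤ r) (h1 : r < 3^k) :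
    (r + u * 3^k) / 3^k = u := by
  rw [Int.add_mul_ediv_right _ _ (pow3_ne k), Int.ediv_eq_zero_of_lt h0 h1, zero_add]

lemma innX_dig (j : ℕ) (a : ℤ) (i : Bool) : dig j (innX j a i) = 1 := by
  cases i
  · show Int.emod (Int.ediv ((3*a+1)*3^j) (3^j)) 3 = 1
    rw [ediv_eq_div, Int.mul_ediv_cancel _ (pow3_ne j)]
    show (3*a+1) % 3 = 1
    omega
  · show Int.emod (Int.ediv ((3*a+2)*3^j - 1) (3^j)) 3 = 1
    have he : (3*a+2)*3^j - 1 = (3^j - 1) + (3*a+1) * 3^j := by ring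
    rw [ediv_eq_div, he, ediv_pow_add j (by have := pow3_pos j; omega) (by have := pow3_pos j; omega)]
    show (3*a+1) % 3 = 1
    omega

lemma innerB_noncell (j : ℕ) (a b : ℤ) (i1 i2 : Bool) : ¬ IsCell (innerB j a b i1 i2) :=
  fun h => h j ⟨innX_dig j a i1, innX_dig j b i2⟩

lemma corX_ediv (m j : ℕ) (a : ℤ) (i : Bool) :
    (corX (j+m) a i) / 3^m = cond i ((3*a+2)*3^j) ((3*a+1)*3^j) := by
  cases i
  · show ((3*a+1 : ℤ) * 3^(j+m)) / 3^m = ((3*a+1)*3^j)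
    rw [pow_add, ← mul_assoc, Int.mul_ediv_cancel _ (pow3_ne m)]
  · show ((3*a+2 : ℤ) * 3^(j+m)) / 3^m = ((3*a+2)*3^j)
    rw [pow_add, ← mul_assoc, Int.mul_ediv_cancel _ (pow3_ne m)]

lemma innX_opts (m j : ℕ) (a : ℤ) (i : Bool) :
    innX j a i = (corX (j+m) a i) / 3^m ∨
      innX j a i = (corX (j+m) a i) / 3^m - 1 := by
  cases i <;> rw [corX_ediv]
  · left; rfl
  · right; rfl

lemma innerB_mem_blocksAt (m j : ℕ) (a b : ℤ) (i1 i2 : Bool) :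
    innerB j a b i1 i2 ∈ blocksAt m (cornerPt (j+m) a b i1 i2) := by
  simp only [blocksAt, Finset.mem_insert, Finset.mem_singleton, Prod.ext_iff]
  rcases innX_opts m j a i1 with e1 | e1 <;> rcases innX_opts m j b i2 with e2 | e2 <;>
    simp only [innerB, cornerPt] <;> tauto

lemma corX_refl (s : ℕ) (a : ℤ) (i : Bool) :
    (6*a+3)*3^s - corX s a i = corX s a (!i) := by
  cases i <;> simp [corX] <;> ring

/-- `q` is one of the four corners of the hole of level `s` at `(a,b)`. -/
def Opts (s : ℕ) (a b : ℤ) (q : ℤ × ℤ) : Prop :=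
  ∃ i1 i2 : Bool, q = cornerPt s a b i1 i2

lemma Opts_Hmap {t : IdentType} {s : ℕ} {a b : ℤ} {q : ℤ × ℤ} (h : Opts s a b q) :
    Opts s a b (Hmap t s a b q) := by
  obtain ⟨i1, i2, rfl⟩ := h
  by_cases hf : flipH t
  · exact ⟨!i1, !i2, Prod.ext_iff.mpr ⟨by rw [Hmap_fst]; exact corX_refl s a i1,
      by rw [Hmap_snd, if_pos hf]; exact corX_refl s b i2⟩⟩
  · exact ⟨!i1, i2, Prod.ext_iff.mpr ⟨by rw [Hmap_fst]; exact corX_refl s a i1,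
      by rw [Hmap_snd, if_neg hf]; rfl⟩⟩

lemma Opts_Vmap {t : IdentType} {s : ℕ} {a b : ℤ} {q : ℤ × ℤ} (h : Opts s a b q) :
    Opts s a b (Vmap t s a b q) := by
  obtain ⟨i1, i2, rfl⟩ := h
  by_cases hf : flipV t
  · exact ⟨!i1, !i2, Prod.ext_iff.mpr ⟨by rw [Vmap_fst, if_pos hf]; exact corX_refl s a i1,
      by rw [Vmap_snd]; exact corX_refl s b i2⟩⟩
  · exact ⟨i1, !i2, Prod.ext_iff.mpr ⟨by rw [Vmap_fst, if_neg hf]; rfl,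
      by rw [Vmap_snd]; exact corX_refl s b i2⟩⟩

lemma le_scale {s m : ℕ} {u c : ℤ} (hu : u % 3 ≠ 0) (h : u * 3^s = c * 3^m) : m ≤ s := by
  by_contra hc
  push_neg at hc
  rw [pow3_split hc c] at h
  have := mul_right_cancel₀ (pow3_ne s) h
  omega

end Aux45d
section Aux45e

lemma ediv_ediv {a b c : ℤ} (hb : 0 < b) (hc : 0 < c) : a / b / c = a / (b * c) := by
  have hbc : 0 < b * c := mul_pos hb hc
  have hra : a = a % (b*c) + (a/(b*c)*c)*b := by
    have h := Int.mul_ediv_add_emod a (b*c)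
    linarith [h]
  set r := a % (b*c) with hr
  have hr0 : 0 ≤ r := Int.emod_nonneg a hbc.ne'
  have hrlt : r < b * c := Int.emod_lt_of_pos a hbc
  calc a / b / c = (r + (a/(b*c)*c)*b) / b / c := by rw [← hra]
    _ = (r / b + a/(b*c)*c) / c := by rw [Int.add_mul_ediv_right _ _ hb.ne']
    _ = r / b / c + a/(b*c) := by rw [Int.add_mul_ediv_right _ _ hc.ne']
    _ = a / (b*c) := by
        have hlt : r / b < c := by
          rw [Int.ediv_lt_iff_lt_mul hb]
          linarith
        rw [Int.ediv_eq_zero_of_lt (Int.ediv_nonneg hr0 hb.le) hlt, zero_add]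

lemma dig_ediv (k m : ℕ) (x : ℤ) : dig k (Int.ediv x (3^m)) = dig (k+m) x := by
  unfold dig
  rw [ediv_eq_div, ediv_eq_div, ediv_eq_div, ediv_ediv (pow3_pos m) (pow3_pos k),
    ← pow_add]
  ring_nf

lemma cell_copy (m : ℕ) (p : ℤ × ℤ) (h : IsCell p) :
    IsCell (Int.ediv p.1 (3^m), Int.ediv p.2 (3^m)) := by
  intro k hk
  exact h (k+m) ⟨by rw [← dig_ediv]; exact hk.1, by rw [← dig_ediv]; exact hk.2⟩

/-- Key lemma: all copies sharing the fixed corner point `p` of the cell block `C`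
(after identification) lie in an explicit 12-element set containing `C`. -/
lemma key (t : IdentType) (m : ℕ) (C p : ℤ × ℤ)
    (hC : IsCell C) (hcp : IsCornerPt m C p) :
    ∃ F : Finset (ℤ × ℤ), C ∈ F ∧ F.card ≤ 12 ∧
      ∀ D q : ℤ × ℤ, IsCell D → IsCornerPt m D q →
        PtEquiv (uniform t) p q → D ∈ F := by
  by_cases hboth : ∃ s a b, HAt s a b p ∧ VAt s a b p
  · obtain ⟨s, a, b, hH, hV⟩ := hboth
    have hms : m ≤ s := by
      rcases hcp.1 with e | e <;> rcases hH.1 with f | f <;>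
        exact le_scale (by omega) (f.symm.trans e)
    set j := s - m with hj
    have hsj : s = j + m := by omega
    have hop : Opts s a b p := by
      rcases hH.1 with f | f <;> rcases hV.1 with g | g
      · exact ⟨false, false, Prod.ext_iff.mpr ⟨f, g⟩⟩
      · exact ⟨false, true, Prod.ext_iff.mpr ⟨f, g⟩⟩
      · exact ⟨true, false, Prod.ext_iff.mpr ⟨f, g⟩⟩
      · exact ⟨true, true, Prod.ext_iff.mpr ⟨f, g⟩⟩
    refine ⟨(Finset.univ : Finset (Bool × Bool)).biUnion
        (fun ii => (blocksAt m (cornerPt s a b ii.1 ii.2)).erase (innerB j a b ii.1 ii.2)),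
      ?_, ?_, ?_⟩
    · obtain ⟨i1, i2, hpc⟩ := hop
      refine Finset.mem_biUnion.mpr ⟨(i1, i2), Finset.mem_univ _,
        Finset.mem_erase.mpr ⟨?_, ?_⟩⟩
      · rintro rfl; exact innerB_noncell j a b i1 i2 hC
      · rw [← hpc]; exact mem_blocksAt_of_corner hcp
    · refine le_trans Finset.card_biUnion_le ?_
      refine le_trans (Finset.sum_le_card_nsmul _ _ 3 ?_) ?_
      · intro ii _
        have h4 := blocksAt_card_le m (cornerPt s a b ii.1 ii.2)
        have hmem := innerB_mem_blocksAt m j a b ii.1 ii.2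
        rw [← hsj] at hmem
        rw [Finset.card_erase_of_mem hmem]
        omega
      · simp
    · intro D q hD hq hpq
      have hqorb := ptEquiv_mem_orb hpq
      have hopq : Opts s a b q := by
        rcases hqorb with hr | ⟨s', a', b', h', hr⟩ | ⟨s', a', b', h', hr⟩ |
          ⟨s', a', b', h', hV', hr⟩
        · rw [hr]; exact hop
        · obtain ⟨hs, ha, hb⟩ := HAt_unique h' hH
          rw [hs, ha, hb] at hr
          rw [hr]; exact Opts_Hmap hop
        · obtain ⟨hs, ha, hb⟩ := VAt_unique h' hV
          rw [hs, ha, hb] at hr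
          rw [hr]; exact Opts_Vmap hop
        · obtain ⟨hs, ha, hb⟩ := HAt_unique h' hH
          rw [hs, ha, hb] at hr
          rw [hr]; exact Opts_Vmap (Opts_Hmap hop)
      obtain ⟨i1, i2, hqc⟩ := hopq
      refine Finset.mem_biUnion.mpr ⟨(i1, i2), Finset.mem_univ _,
        Finset.mem_erase.mpr ⟨?_, ?_⟩⟩
      · rintro rfl; exact innerB_noncell j a b i1 i2 hD
      · rw [← hqc]; exact mem_blocksAt_of_corner hq
  · by_cases hHex : ∃ s a b, HAt s a b p
    · obtain ⟨s, a, b, hH⟩ := hHex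
      refine ⟨blocksAt m p ∪ blocksAt m (Hmap t s a b p),
        Finset.mem_union_left _ (mem_blocksAt_of_corner hcp), ?_, ?_⟩
      · refine le_trans (Finset.card_union_le _ _) ?_
        have h1 := blocksAt_card_le m p
        have h2 := blocksAt_card_le m (Hmap t s a b p)
        omega
      · intro D q hD hq hpq
        rcases ptEquiv_mem_orb hpq with hr | ⟨s', a', b', h', hr⟩ |
          ⟨s', a', b', h', hr⟩ | ⟨s', a', b', h', hV', hr⟩
        · refine Finset.mem_union_left _ ?_
          rw [← hr]; exact mem_blocksAt_of_corner hq
        · obtain ⟨hs, ha, hb⟩ := HAt_unique h' hH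
          rw [hs, ha, hb] at hr
          refine Finset.mem_union_right _ ?_
          rw [← hr]; exact mem_blocksAt_of_corner hq
        · exfalso
          obtain ⟨hs, ha, hb⟩ := HAt_VAt_unique hH h'
          exact hboth ⟨s, a, b, hH, by rw [hs, ha, hb]; exact h'⟩
        · exact absurd ⟨s', a', b', h', hV'⟩ hboth
    · by_cases hVex : ∃ s a b, VAt s a b p
      · obtain ⟨s, a, b, hV⟩ := hVex
        refine ⟨blocksAt m p ∪ blocksAt m (Vmap t s a b p),
          Finset.mem_union_left _ (mem_blocksAt_of_corner hcp), ?_, ?_⟩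
        · refine le_trans (Finset.card_union_le _ _) ?_
          have h1 := blocksAt_card_le m p
          have h2 := blocksAt_card_le m (Vmap t s a b p)
          omega
        · intro D q hD hq hpq
          rcases ptEquiv_mem_orb hpq with hr | ⟨s', a', b', h', hr⟩ |
            ⟨s', a', b', h', hr⟩ | ⟨s', a', b', h', hV', hr⟩
          · refine Finset.mem_union_left _ ?_
            rw [← hr]; exact mem_blocksAt_of_corner hq
          · exact absurd ⟨s', a', b', h'⟩ hHex
          · obtain ⟨hs, ha, hb⟩ := VAt_unique h' hV
            rw [hs, ha, hb] at hr
            refine Finset.mem_union_right _ ?_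
            rw [← hr]; exact mem_blocksAt_of_corner hq
          · exact absurd ⟨s', a', b', h'⟩ hHex
      · refine ⟨blocksAt m p, mem_blocksAt_of_corner hcp,
          le_trans (blocksAt_card_le m p) (by omega), ?_⟩
        intro D q hD hq hpq
        rcases ptEquiv_mem_orb hpq with hr | ⟨s', a', b', h', hr⟩ |
          ⟨s', a', b', h', hr⟩ | ⟨s', a', b', h', hV', hr⟩
        · rw [← hr]; exact mem_blocksAt_of_corner hq
        · exact absurd ⟨s', a', b', h'⟩ hHex
        · exact absurd ⟨s', a', b', h'⟩ hVex
        · exact absurd ⟨s', a', b', h'⟩ hHex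

end Aux45e
/-- For any identification type and any cell `z`, the set `𝒱` of copies of
`V_m` sharing a corner vertex with the copy containing `z` has at most 45 elements. -/
theorem corner_sharing_copies_card (t : IdentType) (m : ℕ) (z : Cell) :
    { D : ℤ × ℤ | IsCopy D ∧ SharesCornerVertex (uniform t) m (copyOf m z) D }.ncard
      ≤ 45 := by
  classical
  set C := copyOf m z with hCdef
  have hC : IsCell C := cell_copy m z.val z.2
  have h1 : IsCornerPt m C (C.1 * 3^m, C.2 * 3^m) := ⟨Or.inl rfl, Or.inl rfl⟩
  have h2 : IsCornerPt m C (C.1 * 3^m, (C.2+1) * 3^m) := ⟨Or.inl rfl, Or.inr rfl⟩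
  have h3 : IsCornerPt m C ((C.1+1) * 3^m, C.2 * 3^m) := ⟨Or.inr rfl, Or.inl rfl⟩
  have h4 : IsCornerPt m C ((C.1+1) * 3^m, (C.2+1) * 3^m) := ⟨Or.inr rfl, Or.inr rfl⟩
  obtain ⟨F1, hCF1, hcard1, hcov1⟩ := key t m C _ hC h1
  obtain ⟨F2, hCF2, hcard2, hcov2⟩ := key t m C _ hC h2
  obtain ⟨F3, hCF3, hcard3, hcov3⟩ := key t m C _ hC h3
  obtain ⟨F4, hCF4, hcard4, hcov4⟩ := key t m C _ hC h4
  set F : Finset (ℤ × ℤ) :=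
    insert C ((F1.erase C ∪ F2.erase C) ∪ (F3.erase C ∪ F4.erase C)) with hF
  have hsub : { D : ℤ × ℤ | IsCopy D ∧ SharesCornerVertex (uniform t) m C D } ⊆ ↑F := by
    rintro D ⟨hDcell, p, q, hpC, hqD, hpq⟩
    have hDmem : D ∈ F1 ∨ D ∈ F2 ∨ D ∈ F3 ∨ D ∈ F4 := by
      obtain ⟨e1, e2⟩ := hpC
      rcases e1 with e1 | e1 <;> rcases e2 with e2 | e2
      · refine Or.inl (hcov1 D q hDcell hqD ?_)
        rwa [show p = (C.1 * 3^m, C.2 * 3^m) from Prod.ext_iff.mpr ⟨e1, e2⟩] at hpq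
      · refine Or.inr (Or.inl (hcov2 D q hDcell hqD ?_))
        rwa [show p = (C.1 * 3^m, (C.2+1) * 3^m) from Prod.ext_iff.mpr ⟨e1, e2⟩] at hpq
      · refine Or.inr (Or.inr (Or.inl (hcov3 D q hDcell hqD ?_)))
        rwa [show p = ((C.1+1) * 3^m, C.2 * 3^m) from Prod.ext_iff.mpr ⟨e1, e2⟩] at hpq
      · refine Or.inr (Or.inr (Or.inr (hcov4 D q hDcell hqD ?_)))
        rwa [show p = ((C.1+1) * 3^m, (C.2+1) * 3^m) from Prod.ext_iff.mpr ⟨e1, e2⟩] at hpq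
    by_cases hDC : D = C
    · refine Finset.mem_coe.mpr ?_
      rw [hDC, hF]
      exact Finset.mem_insert_self _ _
    · refine Finset.mem_coe.mpr (Finset.mem_insert.mpr (Or.inr ?_))
      rcases hDmem with h | h | h | h
      · exact Finset.mem_union_left _
          (Finset.mem_union_left _ (Finset.mem_erase.mpr ⟨hDC, h⟩))
      · exact Finset.mem_union_left _
          (Finset.mem_union_right _ (Finset.mem_erase.mpr ⟨hDC, h⟩))
      · exact Finset.mem_union_right _
          (Finset.mem_union_left _ (Finset.mem_erase.mpr ⟨hDC, h⟩))
      · exact Finset.mem_union_right _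
          (Finset.mem_union_right _ (Finset.mem_erase.mpr ⟨hDC, h⟩))
  have hcard : F.card ≤ 45 := by
    have u0 := Finset.card_insert_le C
      ((F1.erase C ∪ F2.erase C) ∪ (F3.erase C ∪ F4.erase C))
    have u1 := Finset.card_union_le (F1.erase C ∪ F2.erase C) (F3.erase C ∪ F4.erase C)
    have u2 := Finset.card_union_le (F1.erase C) (F2.erase C)
    have u3 := Finset.card_union_le (F3.erase C) (F4.erase C)
    have e1 := Finset.card_erase_of_mem hCF1
    have e2 := Finset.card_erase_of_mem hCF2
    have e3 := Finset.card_erase_of_mem hCF3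
    have e4 := Finset.card_erase_of_mem hCF4
    rw [hF]
    omega
  calc { D : ℤ × ℤ | IsCopy D ∧ SharesCornerVertex (uniform t) m C D }.ncard
      ≤ (↑F : Set (ℤ × ℤ)).ncard := Set.ncard_le_ncard hsub F.finite_toSet
    _ = F.card := Set.ncard_coe_finset F
    _ ≤ 45 := hcard

end MagicCarpet
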